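/- Let δ: A ⥤ B, α: A ⥤ C, β: B ⥤ D, γ: C ⥤ D be a strictly commutative square of categories. Assume α and β are Grothendieck fibrations and that δ maps morphisms that are strongly Cartesian with respect to α to morphisms that are strongly Cartesian with respect to β. Then the square is Cartesian if and only if for every object c of C the functor A_c ⥤ B_{γ(c)} induced by δ between the fibers is an equivalence of categories. -/

import Mathlib

open CategoryTheory

universe v₁ v₂ v₃ v₄ u₁ u₂ u₃ u₄

namespace PaperSquare

variable {A : Type u₁} {B : Type u₂} {C : Type u₃} {D : Type u₄}
variable [Category.{v₁} A] [Category.{v₂} B] [Category.{v₃} C] [Category.{v₄} D]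

/-- The strict fiber product `B ×_D C` of two functors `β : B ⥤ D` and `γ : C ⥤ D`:
objects are pairs `(b, c)` with `β(b) = γ(c)`, morphisms are pairs `(f, g)` with
`β(f) = γ(g)` (up to the identifications of the objects). -/
structure StrictPullback (β : B ⥤ D) (γ : C ⥤ D) : Type max u₂ u₃ where
  left : B
  right : C
  eq : β.obj left = γ.obj right

namespace StrictPullback

variable {β : B ⥤ D} {γ : C ⥤ D}

/-- Morphisms in the strict fiber product. -/
@[ext]
structure Hom (x y : StrictPullback β γ) : Type max v₂ v₃ where
  left : x.left ⟶ y.left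
  right : x.right ⟶ y.right
  w : β.map left = eqToHom x.eq ≫ γ.map right ≫ eqToHom y.eq.symm

instance : Category (StrictPullback β γ) where
  Hom := Hom
  id x := ⟨𝟙 _, 𝟙 _, by simp⟩
  comp f g := ⟨f.left ≫ g.left, f.right ≫ g.right, by
    rw [Functor.map_comp, Functor.map_comp, f.w, g.w]; simp⟩
  id_comp f := by apply Hom.ext <;> simp
  comp_id f := by apply Hom.ext <;> simp
  assoc f g h := by apply Hom.ext <;> simp

@[simp] lemma id_left' (x : StrictPullback β γ) : (𝟙 x : Hom x x).left = 𝟙 x.left := rfl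
@[simp] lemma id_right' (x : StrictPullback β γ) : (𝟙 x : Hom x x).right = 𝟙 x.right := rfl
@[simp] lemma comp_left' {x y z : StrictPullback β γ} (f : x ⟶ y) (g : y ⟶ z) :
    (f ≫ g).left = Hom.left f ≫ Hom.left g := rfl
@[simp] lemma comp_right' {x y z : StrictPullback β γ} (f : x ⟶ y) (g : y ⟶ z) :
    (f ≫ g).right = Hom.right f ≫ Hom.right g := rfl

end StrictPullback

/-- The functor `A ⥤ B ×_D C` induced by a strictly commutative square. -/
def toPullback (δ : A ⥤ B) (α : A ⥤ C) (β : B ⥤ D) (γ : C ⥤ D)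
    (hsq : δ ⋙ β = α ⋙ γ) : A ⥤ StrictPullback β γ where
  obj a := ⟨δ.obj a, α.obj a, Functor.congr_obj hsq a⟩
  map f := ⟨δ.map f, α.map f, Functor.congr_hom hsq f⟩
  map_id a := by apply StrictPullback.Hom.ext <;> simp
  map_comp f g := by apply StrictPullback.Hom.ext <;> simp

/-- The square is Cartesian if the induced functor `A ⥤ B ×_D C` is an equivalence. -/
def IsCartesianSq (δ : A ⥤ B) (α : A ⥤ C) (β : B ⥤ D) (γ : C ⥤ D)
    (hsq : δ ⋙ β = α ⋙ γ) : Prop :=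
  (toPullback δ α β γ hsq).IsEquivalence

/-- The full subcategory of the comma category `(β ↓ γ)` spanned by the objects
`(b, c, ν : β(b) → γ(c))` in which `ν` is an isomorphism. -/
def IsoComma (β : B ⥤ D) (γ : C ⥤ D) :=
  ObjectProperty.FullSubcategory (fun x : Comma β γ => IsIso x.hom)

instance (β : B ⥤ D) (γ : C ⥤ D) : Category (IsoComma β γ) :=
  ObjectProperty.FullSubcategory.category _

/-- The functor `A ⥤ (β ↓ γ)^≅` induced by a strictly commutative square. -/
def toIsoComma (δ : A ⥤ B) (α : A ⥤ C) (β : B ⥤ D) (γ : C ⥤ D)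
    (hsq : δ ⋙ β = α ⋙ γ) : A ⥤ IsoComma β γ where
  obj a := ⟨{ left := δ.obj a, right := α.obj a,
              hom := eqToHom (Functor.congr_obj hsq a) }, inferInstance⟩
  map {a a'} f := ⟨
    { left := δ.map f
      right := α.map f
      w := by
        have h := Functor.congr_hom hsq f
        simp only [Functor.comp_map] at h
        simp [h] }⟩

/-- The square is 2-Cartesian if the induced functor to the iso-comma category is an
equivalence. -/
def Is2CartesianSq (δ : A ⥤ B) (α : A ⥤ C) (β : B ⥤ D) (γ : C ⥤ D)
    (hsq : δ ⋙ β = α ⋙ γ) : Prop :=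
  (toIsoComma δ α β γ hsq).IsEquivalence

/-- A functor `β : B ⥤ D` is an iso-fibration if every isomorphism `β(b) ≅ d` lifts to an
isomorphism `b ≅ b'` with `β(b') = d` mapping to it strictly. -/
def IsIsoFibration (β : B ⥤ D) : Prop :=
  ∀ (b : B) (d : D) (ψ : β.obj b ≅ d), ∃ (b' : B) (e : β.obj b' = d) (φ : b ≅ b'),
    β.map φ.hom = ψ.hom ≫ eqToHom e.symm

/-- A morphism `ξ : x ⟶ y` is strongly coCartesian with respect to `p : E ⥤ S` if for every
morphism `h : x ⟶ z` and every factorization `p(h) = v ∘ p(ξ)` there is a unique morphism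
`w : y ⟶ z` with `p(w) = v` and `w ∘ ξ = h`. -/
def IsStronglyCocartesian {E : Type u₁} {S : Type u₂} [Category.{v₁} E] [Category.{v₂} S]
    (p : E ⥤ S) {x y : E} (ξ : x ⟶ y) : Prop :=
  ∀ (z : E) (h : x ⟶ z) (v : p.obj y ⟶ p.obj z), p.map h = p.map ξ ≫ v →
    ∃! w : y ⟶ z, p.map w = v ∧ ξ ≫ w = h

/-- A morphism `ξ : x ⟶ y` is strongly Cartesian with respect to `p : E ⥤ S` if for every
morphism `h : z ⟶ y` and every factorization `p(h) = p(ξ) ∘ v` there is a unique morphism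
`w : z ⟶ x` with `p(w) = v` and `ξ ∘ w = h`. -/
def IsStronglyCartesian {E : Type u₁} {S : Type u₂} [Category.{v₁} E] [Category.{v₂} S]
    (p : E ⥤ S) {x y : E} (ξ : x ⟶ y) : Prop :=
  ∀ (z : E) (h : z ⟶ y) (v : p.obj z ⟶ p.obj x), p.map h = v ≫ p.map ξ →
    ∃! w : z ⟶ x, p.map w = v ∧ w ≫ ξ = h

/-- `p : E ⥤ S` is a Grothendieck opfibration if every morphism `p(x) ⟶ s` admits a strongly
coCartesian lift starting at `x`. -/
def IsGrothendieckOpfibration {E : Type u₁} {S : Type u₂} [Category.{v₁} E] [Category.{v₂} S]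
    (p : E ⥤ S) : Prop :=
  ∀ (x : E) (s : S) (f : p.obj x ⟶ s), ∃ (y : E) (ξ : x ⟶ y) (hy : p.obj y = s),
    p.map ξ = f ≫ eqToHom hy.symm ∧ IsStronglyCocartesian p ξ

/-- `p : E ⥤ S` is a Grothendieck fibration if every morphism `s ⟶ p(y)` admits a strongly
Cartesian lift ending at `y`. -/
def IsGrothendieckFibration {E : Type u₁} {S : Type u₂} [Category.{v₁} E] [Category.{v₂} S]
    (p : E ⥤ S) : Prop :=
  ∀ (y : E) (s : S) (f : s ⟶ p.obj y), ∃ (x : E) (ξ : x ⟶ y) (hx : p.obj x = s),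
    p.map ξ = eqToHom hx ≫ f ∧ IsStronglyCartesian p ξ

section Fiber

variable {E : Type u₁} {S : Type u₂} [Category.{v₁} E] [Category.{v₂} S]

/-- The fiber of `p : E ⥤ S` over `s`: objects of `E` mapping to `s` and morphisms mapping
to `𝟙 s`. -/
def Fiber (p : E ⥤ S) (s : S) : Type u₁ := {x : E // p.obj x = s}

instance Fiber.category (p : E ⥤ S) (s : S) : Category (Fiber p s) where
  Hom x y := {f : x.1 ⟶ y.1 // p.map f = eqToHom (x.2.trans y.2.symm)}
  id x := ⟨𝟙 _, by simp⟩
  comp f g := ⟨f.1 ≫ g.1, by rw [Functor.map_comp, f.2, g.2, eqToHom_trans]⟩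
  id_comp f := Subtype.ext (Category.id_comp f.1)
  comp_id f := Subtype.ext (Category.comp_id f.1)
  assoc f g h := Subtype.ext (Category.assoc f.1 g.1 h.1)

end Fiber

variable {δ : A ⥤ B} {α : A ⥤ C} {β : B ⥤ D} {γ : C ⥤ D}

/-- The functor `A_c ⥤ B_{γ(c)}` between fibers induced by `δ`. -/
def fiberFunctor (hsq : δ ⋙ β = α ⋙ γ) (c : C) : Fiber α c ⥤ Fiber β (γ.obj c) where
  obj x := ⟨δ.obj x.1, by
    have h1 : β.obj (δ.obj x.1) = γ.obj (α.obj x.1) := Functor.congr_obj hsq x.1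
    rw [h1, x.2]⟩
  map {x y} f := ⟨δ.map f.1, by
    have h := Functor.congr_hom hsq f.1
    simp only [Functor.comp_map] at h
    rw [h, f.2]
    simp [eqToHom_map]⟩
  map_id x := Subtype.ext (δ.map_id x.1)
  map_comp f g := Subtype.ext (δ.map_comp f.1 g.1)

section AuxLemmas

lemma sq_hom (hsq : δ ⋙ β = α ⋙ γ) {x y : A} (f : x ⟶ y) :
    β.map (δ.map f) =
      eqToHom (Functor.congr_obj hsq x) ≫ γ.map (α.map f) ≫
        eqToHom (Functor.congr_obj hsq y).symm := by
  have h := Functor.congr_hom hsq f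
  simpa using h

lemma isIso_of_stronglyCartesian {E : Type*} {S : Type*} [Category E] [Category S]
    {p : E ⥤ S} {x y : E} {ξ : x ⟶ y} (h : IsStronglyCartesian p ξ)
    (hi : IsIso (p.map ξ)) : IsIso ξ := by
  obtain ⟨w, ⟨hw1, hw2⟩, -⟩ := h y (𝟙 y) (inv (p.map ξ)) (by simp)
  obtain ⟨u, hu, huniq⟩ := h x ξ (𝟙 _) (by simp)
  refine ⟨w, ?_, hw2⟩
  have h1 : ξ ≫ w = u := huniq (ξ ≫ w) ⟨by simp [hw1], by rw [Category.assoc, hw2]; simp⟩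
  have h2 : 𝟙 x = u := huniq (𝟙 x) ⟨by simp, by simp⟩
  rw [h1, ← h2]

lemma Fiber.isIso_of {E : Type*} {S : Type*} [Category E] [Category S] {p : E ⥤ S} {s : S}
    {x y : Fiber p s} (f : x ⟶ y) (hf : IsIso f.1) : IsIso f := by
  refine ⟨⟨inv f.1, ?_⟩, ?_, ?_⟩
  · rw [Functor.map_inv]
    exact IsIso.inv_eq_of_hom_inv_id (by rw [f.2]; simp)
  · exact Subtype.ext (show f.1 ≫ inv f.1 = 𝟙 _ by simp)
  · exact Subtype.ext (show inv f.1 ≫ f.1 = 𝟙 _ by simp)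

lemma eqToHom_chain {E S : Type*} [Category E] [Category S] (G : E ⥤ S) {a b : S} {y z : E}
    (p : a = b) (q : a = G.obj y) (r : y = z) (s : G.obj z = b) :
    eqToHom p = eqToHom q ≫ G.map (eqToHom r) ≫ eqToHom s := by
  subst r; simp

lemma eqToHom_chain2 {E S : Type*} [Category E] [Category S] (G : E ⥤ S) {a b : S}
    {y y' z : E} (f : y ⟶ z) (hz : y' = y) (p : a = G.obj y) (q : G.obj z = b)
    {a' : S} (p0 : a = a') (p' : a' = G.obj y') (q' : G.obj z = b) :
    eqToHom p ≫ G.map f ≫ eqToHom q =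
      eqToHom p0 ≫ eqToHom p' ≫ G.map (eqToHom hz ≫ f) ≫ eqToHom q' := by
  subst hz; simp

lemma eqToHom_chain4 {E S : Type*} [Category E] [Category S] (G : E ⥤ S) {a m b : S}
    {y' y z : E} (hz : y' = y) (r : y ⟶ z) (h : z ⟶ y) (hir : r ≫ h = 𝟙 y)
    (p : a = G.obj y') (q : G.obj z = m) (q' : m = G.obj z) (s : G.obj y = b) (t : a = b) :
    (eqToHom p ≫ G.map (eqToHom hz ≫ r) ≫ eqToHom q) ≫ eqToHom q' ≫ G.map h ≫ eqToHom s =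
      eqToHom t := by
  subst hz; subst q'
  simp only [eqToHom_refl, Category.id_comp, Category.assoc, eqToHom_trans_assoc]
  rw [← G.map_comp_assoc, hir]
  simp

lemma eqToHom_chain3 {E : Type*} [Category E] {X Y Z : E} (p : X = Y) (q : Y = X) (f : X ⟶ Z) :
    eqToHom p ≫ eqToHom q ≫ f = f := by
  simp

lemma eqToHom_chain5 {E : Type*} [Category E] {X Y : E} (p : X = Y) (q : Y = X) :
    eqToHom p ≫ eqToHom q = 𝟙 X := by
  simp

end AuxLemmas

/-- If `α` and `β` are Grothendieck fibrations and `δ` maps strongly Cartesian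
morphisms (w.r.t. `α`) to strongly Cartesian morphisms (w.r.t. `β`), then the square is
Cartesian if and only if for every object `c` of `C` the induced functor between the fibers
`A_c ⥤ B_{γ(c)}` is an equivalence of categories. -/
theorem isCartesianSq_iff_fiberwise_equivalence
    (hsq : δ ⋙ β = α ⋙ γ)
    (hα : IsGrothendieckFibration α) (hβ : IsGrothendieckFibration β)
    (hδ : ∀ {x y : A} (f : x ⟶ y), IsStronglyCartesian α f → IsStronglyCartesian β (δ.map f)) :
    IsCartesianSq δ α β γ hsq ↔ ∀ c : C, (fiberFunctor hsq c).IsEquivalence := by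
  constructor
  · intro hF c
    haveI : (toPullback δ α β γ hsq).IsEquivalence := hF
    set F := toPullback δ α β γ hsq with hFdef
    refine { faithful := ?_, full := ?_, essSurj := ?_ }
    · refine ⟨fun {x y} {f g} h => ?_⟩
      have hl : δ.map f.1 = δ.map g.1 := congrArg Subtype.val h
      refine Subtype.ext (F.map_injective (StrictPullback.Hom.ext ?_ ?_))
      · exact hl
      · exact f.2.trans g.2.symm
    · refine ⟨fun {x y} u => ?_⟩
      have hw : β.map u.1 = eqToHom (F.obj x.1).eq ≫ γ.map (eqToHom (x.2.trans y.2.symm)) ≫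
          eqToHom (F.obj y.1).eq.symm := by
        erw [u.2]; exact eqToHom_chain γ _ _ _ _
      obtain ⟨f, hf⟩ := F.map_surjective ⟨u.1, eqToHom (x.2.trans y.2.symm), hw⟩
      refine ⟨⟨f, ?_⟩, Subtype.ext ?_⟩
      · exact congrArg StrictPullback.Hom.right hf
      · exact congrArg StrictPullback.Hom.left hf
    · refine ⟨fun b => ?_⟩
      set P : StrictPullback β γ := ⟨b.1, c, b.2⟩ with hP
      set a := F.objPreimage P with ha
      set e := F.objObjPreimageIso P with he
      have hri : e.hom.right ≫ e.inv.right = 𝟙 _ := congrArg StrictPullback.Hom.right e.hom_inv_id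
      have hir : e.inv.right ≫ e.hom.right = 𝟙 _ := congrArg StrictPullback.Hom.right e.inv_hom_id
      have hli : e.hom.left ≫ e.inv.left = 𝟙 _ := congrArg StrictPullback.Hom.left e.hom_inv_id
      have hil : e.inv.left ≫ e.hom.left = 𝟙 _ := congrArg StrictPullback.Hom.left e.inv_hom_id
      haveI : IsIso e.hom.left := ⟨e.inv.left, hli, hil⟩
      haveI : IsIso e.inv.right := ⟨e.hom.right, hir, hri⟩
      obtain ⟨z, ξ, hz, hξ, hcart⟩ := hα a c e.inv.right
      haveI : IsIso (α.map ξ) := by rw [hξ]; exact IsIso.comp_isIso' inferInstance ‹IsIso e.inv.right›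
      haveI : IsIso ξ := isIso_of_stronglyCartesian hcart inferInstance
      have hE : β.obj (δ.obj z) = γ.obj c := by
        have h0 := Functor.congr_obj hsq z
        simp only [Functor.comp_obj] at h0
        rw [h0, hz]
      have hw : β.map (δ.map ξ ≫ e.hom.left) = eqToHom (hE.trans b.2.symm) := by
        erw [Functor.map_comp, sq_hom hsq ξ, hξ, e.hom.w]
        exact eqToHom_chain4 γ _ _ _ hir _ _ _ _ _
      refine ⟨⟨z, hz⟩, ⟨?_⟩⟩
      haveI : IsIso (⟨δ.map ξ ≫ e.hom.left, hw⟩ :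
          (fiberFunctor hsq c).obj ⟨z, hz⟩ ⟶ b) :=
        Fiber.isIso_of _ (show IsIso (δ.map ξ ≫ e.hom.left) from IsIso.comp_isIso' inferInstance ‹IsIso e.hom.left›)
      exact asIso (⟨δ.map ξ ≫ e.hom.left, hw⟩ : (fiberFunctor hsq c).obj ⟨z, hz⟩ ⟶ b)
  · intro h
    haveI : ∀ c : C, (fiberFunctor hsq c).IsEquivalence := h
    refine { faithful := ?_, full := ?_, essSurj := ?_ }
    · refine ⟨fun {x y} {f g} hfg => ?_⟩
      have hl : δ.map f = δ.map g := congrArg StrictPullback.Hom.left hfg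
      have hr : α.map f = α.map g := congrArg StrictPullback.Hom.right hfg
      obtain ⟨z, ξ, hz, hξ, hcart⟩ := hα y (α.obj x) (α.map f)
      obtain ⟨w, ⟨hw1, hw2⟩, -⟩ := hcart x f (eqToHom hz.symm) (by rw [hξ]; simp)
      obtain ⟨w', ⟨hw1', hw2'⟩, -⟩ := hcart x g (eqToHom hz.symm) (by rw [hξ, ← hr]; simp)
      have hE : β.obj (δ.obj x) = β.obj (δ.obj z) := by
        have h1 := Functor.congr_obj hsq x
        have h2 := Functor.congr_obj hsq z
        simp only [Functor.comp_obj] at h1 h2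
        rw [h1, h2, hz]
      have hβw : β.map (δ.map w) = eqToHom hE := by
        rw [sq_hom hsq w, hw1]
        simp [eqToHom_map]
      have hβw' : β.map (δ.map w') = eqToHom hE := by
        rw [sq_hom hsq w', hw1']
        simp [eqToHom_map]
      obtain ⟨u, -, huniq⟩ := hδ ξ hcart (δ.obj x) (δ.map f) (eqToHom hE)
        (by rw [← hw2, Functor.map_comp, Functor.map_comp, hβw])
      have hu1 : δ.map w = u := huniq (δ.map w) ⟨hβw, by rw [← Functor.map_comp, hw2]⟩
      have hu2 : δ.map w' = u := huniq (δ.map w')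
        ⟨hβw', by rw [← Functor.map_comp, hw2', ← hl]⟩
      let X : Fiber α (α.obj x) := ⟨x, rfl⟩
      let Z : Fiber α (α.obj x) := ⟨z, hz⟩
      have hwfib : (⟨w, hw1⟩ : X ⟶ Z) = ⟨w', hw1'⟩ := by
        apply (fiberFunctor hsq (α.obj x)).map_injective
        exact Subtype.ext (hu1.trans hu2.symm)
      have hww : w = w' := Subtype.ext_iff.mp hwfib
      rw [← hw2, ← hw2', hww]
    · refine ⟨fun {x y} φ => ?_⟩
      obtain ⟨z, ξ, hz, hξ, hcart⟩ := hα y (α.obj x) φ.right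
      have hE : β.obj (δ.obj x) = β.obj (δ.obj z) := by
        have h1 := Functor.congr_obj hsq x
        have h2 := Functor.congr_obj hsq z
        simp only [Functor.comp_obj] at h1 h2
        rw [h1, h2, hz]
      obtain ⟨w, ⟨hw1, hw2⟩, -⟩ := hδ ξ hcart (δ.obj x) φ.left (eqToHom hE)
        (by erw [φ.w, sq_hom hsq ξ, hξ]; exact eqToHom_chain2 γ _ _ _ _ _ _ _)
      let X : Fiber α (α.obj x) := ⟨x, rfl⟩
      let Z : Fiber α (α.obj x) := ⟨z, hz⟩
      obtain ⟨m, hm⟩ := (fiberFunctor hsq (α.obj x)).map_surjective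
        (X := X) (Y := Z) ⟨w, hw1⟩
      have hδm : δ.map m.1 = w := Subtype.ext_iff.mp hm
      refine ⟨m.1 ≫ ξ, ?_⟩
      apply StrictPullback.Hom.ext
      · show δ.map (m.1 ≫ ξ) = φ.left
        rw [Functor.map_comp, hδm, hw2]
      · show α.map (m.1 ≫ ξ) = φ.right
        rw [Functor.map_comp, m.2, hξ]
        exact eqToHom_chain3 _ _ _
    · refine ⟨fun P => ?_⟩
      haveI := h P.right
      set x₀ := (fiberFunctor hsq P.right).objPreimage ⟨P.left, P.eq⟩ with hx₀
      set e := (fiberFunctor hsq P.right).objObjPreimageIso ⟨P.left, P.eq⟩ with he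
      refine ⟨x₀.1, ⟨⟨⟨e.hom.1, eqToHom x₀.2, ?_⟩, ⟨e.inv.1, eqToHom x₀.2.symm, ?_⟩, ?_, ?_⟩⟩⟩
      · erw [e.hom.2]
        exact eqToHom_chain γ _ _ _ _
      · erw [e.inv.2]
        exact eqToHom_chain γ _ _ _ _
      · apply StrictPullback.Hom.ext
        · exact congrArg Subtype.val e.hom_inv_id
        · exact eqToHom_chain5 x₀.2 x₀.2.symm
      · apply StrictPullback.Hom.ext
        · exact congrArg Subtype.val e.inv_hom_id
        · exact eqToHom_chain5 x₀.2.symm x₀.2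

end PaperSquare
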